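/- In the 3-player construction above, in every envy-free complete connected division player 1 must receive the rightmost piece, and this piece must contain the interval (2/3 + 2ε, 1). -/

import Mathlib

open MeasureTheory Set
open scoped ENNReal

/-- A connected division of the cake `[0,1]` among `n` players: each player gets an
open interval, the intervals are pairwise disjoint and contained in `[0,1]`. -/
structure ConnDiv (n : ℕ) where
  pieces : Fin n → Set ℝ
  isInterval : ∀ i, ∃ a b : ℝ, pieces i = Set.Ioo a b
  subset : ∀ i, pieces i ⊆ Set.Icc (0:ℝ) 1
  disj : Pairwise fun i j => Disjoint (pieces i) (pieces j)

/-- A connected division is complete if the closures of the pieces cover `[0,1]`. -/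
def ConnDiv.Complete {n : ℕ} (d : ConnDiv n) : Prop :=
  Set.Icc (0:ℝ) 1 ⊆ ⋃ i, closure (d.pieces i)

/-- Envy-freeness: every player weakly prefers her own piece. -/
def EnvyFree {n : ℕ} (v : Fin n → Measure ℝ) (d : ConnDiv n) : Prop :=
  ∀ i j, v i (d.pieces j) ≤ v i (d.pieces i)

/-- Utilitarian welfare: sum of own-piece values. -/
noncomputable def util {n : ℕ} (v : Fin n → Measure ℝ) (d : ConnDiv n) : ℝ≥0∞ :=
  ∑ i, v i (d.pieces i)

/-- Egalitarian welfare: minimum own-piece value. -/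
noncomputable def egal {n : ℕ} (v : Fin n → Measure ℝ) (d : ConnDiv n) : ℝ≥0∞ :=
  ⨅ i, v i (d.pieces i)

/-- The uniform measure of total mass `m` on the interval `(a,b)`. -/
noncomputable def unifOn (a b m : ℝ) : Measure ℝ :=
  ENNReal.ofReal (m / (b - a)) • volume.restrict (Set.Ioo a b)

/-- Player 1's measure: value `1/2 - ε` uniformly on `(0,ε)`, value `3ε`
uniformly on `(2/3, 2/3+3ε)`, value `1/2 - 2ε` uniformly on `(1-ε, 1)`. -/
noncomputable def w1 (ε : ℝ) : Measure ℝ :=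
  unifOn 0 ε (1/2 - ε) + unifOn (2/3) (2/3 + 3*ε) (3*ε) + unifOn (1-ε) 1 (1/2 - 2*ε)

/-- The uniform (Lebesgue) measure on `[0,1]`. -/
noncomputable def wU : Measure ℝ := volume.restrict (Set.Icc (0:ℝ) 1)

noncomputable def vEg3 (ε : ℝ) : Fin 3 → Measure ℝ := ![w1 ε, wU, wU]

/-! ### Auxiliary measure computations -/

lemma unifOn_apply (a b m : ℝ) {S : Set ℝ} (hS : MeasurableSet S) :
    unifOn a b m S = ENNReal.ofReal (m / (b - a)) * volume (S ∩ Set.Ioo a b) := by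
  rw [unifOn, Measure.smul_apply, Measure.restrict_apply hS, smul_eq_mul]

lemma unifOn_singleton (a b m x : ℝ) : unifOn a b m {x} = 0 := by
  rw [unifOn_apply _ _ _ (measurableSet_singleton x),
    measure_mono_null inter_subset_left Real.volume_singleton, mul_zero]

lemma w1_singleton (ε x : ℝ) : w1 ε {x} = 0 := by
  simp [w1, unifOn_singleton]

lemma wU_singleton (x : ℝ) : wU {x} = 0 := by
  rw [wU, Measure.restrict_apply (measurableSet_singleton x),
    measure_mono_null inter_subset_left Real.volume_singleton]

lemma wU_Ioo {u v : ℝ} (h0 : 0 ≤ u) (h1 : v ≤ 1) :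
    wU (Set.Ioo u v) = ENNReal.ofReal (v - u) := by
  rw [wU, Measure.restrict_apply measurableSet_Ioo,
    Set.inter_eq_left.mpr (fun x hx => Set.mem_Icc.mpr ⟨le_of_lt (lt_of_le_of_lt h0 hx.1),
      le_of_lt (lt_of_lt_of_le hx.2 h1)⟩), Real.volume_Ioo]

lemma wU_Icc01 : wU (Set.Icc (0:ℝ) 1) = 1 := by
  rw [wU, Measure.restrict_apply measurableSet_Icc, Set.inter_self, Real.volume_Icc]
  norm_num

lemma w1_Ioo (ε u v : ℝ) (hε : 0 < ε) (hε' : ε < 1/20) :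
    w1 ε (Set.Ioo u v) = ENNReal.ofReal ((1/2-ε)/ε * (min v ε - max u 0))
      + ENNReal.ofReal (min v (2/3+3*ε) - max u (2/3))
      + ENNReal.ofReal ((1/2-2*ε)/ε * (min v 1 - max u (1-ε))) := by
  have h3ε : (3:ℝ)*ε ≠ 0 := by positivity
  rw [w1, Measure.add_apply, Measure.add_apply,
    unifOn_apply _ _ _ measurableSet_Ioo, unifOn_apply _ _ _ measurableSet_Ioo,
    unifOn_apply _ _ _ measurableSet_Ioo, Set.Ioo_inter_Ioo, Set.Ioo_inter_Ioo,
    Set.Ioo_inter_Ioo, Real.volume_Ioo, Real.volume_Ioo, Real.volume_Ioo]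
  rw [show ε - 0 = ε by ring, show 2/3 + 3*ε - 2/3 = 3*ε by ring,
    show (1:ℝ) - (1-ε) = ε by ring, div_self h3ε]
  rw [← ENNReal.ofReal_mul (div_nonneg (by linarith) hε.le),
    ← ENNReal.ofReal_mul (div_nonneg (by linarith) hε.le),
    ENNReal.ofReal_one, one_mul]

variable {ε : ℝ}

lemma w1_left (hε : 0 < ε) (hε' : ε < 1/20) {x1 : ℝ} (h1 : 1/3 ≤ x1) (h2 : x1 ≤ 2/3) :
    w1 ε (Set.Ioo 0 x1) = ENNReal.ofReal (1/2 - ε) := by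
  rw [w1_Ioo ε 0 x1 hε hε', min_eq_right (by linarith), max_self,
    min_eq_left (by linarith), max_eq_right (by norm_num),
    min_eq_left (by linarith), max_eq_right (by linarith), sub_zero,
    div_mul_cancel₀ _ hε.ne',
    ENNReal.ofReal_eq_zero.mpr (show x1 - 2/3 ≤ 0 by linarith),
    ENNReal.ofReal_eq_zero.mpr (mul_nonpos_of_nonneg_of_nonpos
      (div_nonneg (show (0:ℝ) ≤ 1/2-2*ε by linarith) hε.le)
      (show x1 - (1-ε) ≤ 0 by linarith)), add_zero, add_zero]

lemma w1_mid_right (hε : 0 < ε) (hε' : ε < 1/20) :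
    w1 ε (Set.Ioo (2/3) 1) = ENNReal.ofReal (1/2 + ε) := by
  rw [w1_Ioo ε (2/3) 1 hε hε', min_eq_right (by linarith), max_eq_left (by linarith),
    min_eq_right (by linarith), max_eq_left (by linarith), min_self,
    max_eq_right (by linarith), show (1:ℝ) - (1-ε) = ε by ring,
    div_mul_cancel₀ _ hε.ne',
    ENNReal.ofReal_eq_zero.mpr (mul_nonpos_of_nonneg_of_nonpos
      (div_nonneg (show (0:ℝ) ≤ 1/2-ε by linarith) hε.le)
      (show ε - 2/3 ≤ 0 by linarith)), zero_add,
    show (2:ℝ)/3 + 3*ε - 2/3 = 3*ε by ring,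
    ← ENNReal.ofReal_add (show (0:ℝ) ≤ 3*ε by linarith) (show (0:ℝ) ≤ 1/2-2*ε by linarith),
    show 3*ε + (1/2-2*ε) = 1/2+ε by ring]

lemma w1_right_le (hε : 0 < ε) (hε' : ε < 1/20) {x2 : ℝ} (h : 2/3 ≤ x2) :
    w1 ε (Set.Ioo x2 1) ≤ ENNReal.ofReal (max (2/3+3*ε-x2) 0 + (1/2-2*ε)) := by
  rw [w1_Ioo ε x2 1 hε hε', min_eq_right (by linarith), max_eq_left (by linarith),
    min_eq_right (by linarith), max_eq_left h, min_self,
    ENNReal.ofReal_eq_zero.mpr (mul_nonpos_of_nonneg_of_nonpos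
      (div_nonneg (show (0:ℝ) ≤ 1/2-ε by linarith) hε.le)
      (show ε - x2 ≤ 0 by linarith)), zero_add]
  have h3 : ENNReal.ofReal ((1/2-2*ε)/ε * (1 - max x2 (1-ε)))
      ≤ ENNReal.ofReal (1/2-2*ε) := by
    apply ENNReal.ofReal_le_ofReal
    have hb : 1 - max x2 (1-ε) ≤ ε := by
      have := le_max_right x2 (1-ε); linarith
    have hcnn : (0:ℝ) ≤ (1/2-2*ε)/ε := div_nonneg (by linarith) hε.le
    calc (1/2-2*ε)/ε * (1 - max x2 (1-ε)) ≤ (1/2-2*ε)/ε * ε :=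
      mul_le_mul_of_nonneg_left hb hcnn
    _ = 1/2-2*ε := div_mul_cancel₀ _ hε.ne'
  calc ENNReal.ofReal (2/3+3*ε - x2) + ENNReal.ofReal ((1/2-2*ε)/ε * (1 - max x2 (1-ε)))
      ≤ ENNReal.ofReal (max (2/3+3*ε-x2) 0) + ENNReal.ofReal (1/2-2*ε) :=
        add_le_add (ENNReal.ofReal_le_ofReal (le_max_left _ _)) h3
  _ = ENNReal.ofReal (max (2/3+3*ε-x2) 0 + (1/2-2*ε)) :=
        (ENNReal.ofReal_add (le_max_right _ _) (show (0:ℝ) ≤ 1/2-2*ε by linarith)).symm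

lemma w1_total_pos (hε : 0 < ε) (hε' : ε < 1/20) : 0 < w1 ε (Set.Icc 0 1) := by
  have h1 : w1 ε (Set.Ioo 0 1) ≤ w1 ε (Set.Icc 0 1) := measure_mono Set.Ioo_subset_Icc_self
  rw [w1_Ioo ε 0 1 hε hε'] at h1
  refine lt_of_lt_of_le ?_ (le_trans (le_add_right (le_add_left le_rfl)) h1)
  rw [min_eq_right (by linarith), max_eq_right (by norm_num)]
  exact ENNReal.ofReal_pos.mpr (by linarith)

/-- In the 3-player construction, in every envy-free complete connected
division player 1 receives the rightmost piece, and this piece contains the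
interval `(2/3 + 2ε, 1)`. -/
theorem player1_gets_rightmost (ε : ℝ) (hε : 0 < ε) (hε' : ε < 1/20)
    (d : ConnDiv 3) (hc : d.Complete) (hEF : EnvyFree (vEg3 ε) d) :
    (∃ a : ℝ, a < 1 ∧ d.pieces 0 = Set.Ioo a 1) ∧
    Set.Ioo (2/3 + 2*ε) 1 ⊆ d.pieces 0 := by
  classical
  obtain ⟨a, b, hab⟩ : ∃ a b : Fin 3 → ℝ, ∀ i, d.pieces i = Set.Ioo (a i) (b i) := by
    choose a b hab using d.isInterval
    exact ⟨a, b, hab⟩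
  have hV0 : vEg3 ε 0 = w1 ε := rfl
  have hVU : ∀ i : Fin 3, i ≠ 0 → vEg3 ε i = wU := by
    intro i hi; fin_cases i
    · exact absurd rfl hi
    · rfl
    · rfl
  have hsing : ∀ (i : Fin 3) (x : ℝ), vEg3 ε i {x} = 0 := by
    intro i x; fin_cases i
    · exact w1_singleton ε x
    · exact wU_singleton x
    · exact wU_singleton x
  have htotpos : ∀ i : Fin 3, 0 < vEg3 ε i (Set.Icc 0 1) := by
    intro i; fin_cases i
    · exact w1_total_pos hε hε'
    · show (0:ℝ≥0∞) < wU (Set.Icc 0 1)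
      rw [wU_Icc01]; norm_num
    · show (0:ℝ≥0∞) < wU (Set.Icc 0 1)
      rw [wU_Icc01]; norm_num
  -- all pieces are nonempty
  have hne : ∀ i, a i < b i := by
    by_contra h
    push_neg at h
    obtain ⟨i, hi⟩ := h
    have he : d.pieces i = ∅ := by rw [hab i]; exact Set.Ioo_eq_empty (not_lt.mpr hi)
    have hz : ∀ j, vEg3 ε i (d.pieces j) = 0 := fun j =>
      le_antisymm (by simpa [he] using hEF i j) zero_le
    have hcl : ∀ j, vEg3 ε i (closure (d.pieces j)) = 0 := by
      intro j
      have h1 : closure (d.pieces j) ⊆ d.pieces j ∪ ({a j} ∪ {b j}) := by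
        rw [hab j]
        refine (closure_minimal Set.Ioo_subset_Icc_self isClosed_Icc).trans ?_
        intro x hx
        rcases eq_or_ne x (a j) with h'|h'
        · exact Or.inr (Or.inl h')
        rcases eq_or_ne x (b j) with h''|h''
        · exact Or.inr (Or.inr h'')
        exact Or.inl ⟨lt_of_le_of_ne hx.1 (Ne.symm h'), lt_of_le_of_ne hx.2 h''⟩
      have := measure_mono (μ := vEg3 ε i) h1
      refine le_antisymm (this.trans ?_) zero_le
      calc vEg3 ε i (d.pieces j ∪ ({a j} ∪ {b j}))
          ≤ vEg3 ε i (d.pieces j) + vEg3 ε i ({a j} ∪ {b j}) := measure_union_le _ _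
        _ ≤ vEg3 ε i (d.pieces j) + (vEg3 ε i {a j} + vEg3 ε i {b j}) :=
            add_le_add le_rfl (measure_union_le _ _)
        _ = 0 := by rw [hz j, hsing, hsing]; simp
    have hzero : vEg3 ε i (Set.Icc 0 1) = 0 := by
      refine le_antisymm ?_ zero_le
      calc vEg3 ε i (Set.Icc 0 1) ≤ vEg3 ε i (⋃ j, closure (d.pieces j)) := measure_mono hc
        _ ≤ ∑' j, vEg3 ε i (closure (d.pieces j)) := measure_iUnion_le _
        _ = 0 := by rw [tsum_fintype]; simp [hcl]
    exact absurd hzero (htotpos i).ne'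
  -- endpoint bounds
  have ha0 : ∀ i, 0 ≤ a i ∧ b i ≤ 1 := by
    intro i
    have h := d.subset i; rw [hab i] at h
    constructor
    · by_contra hlt
      push_neg at hlt
      have hm : a i < min (b i) 0 := lt_min (hne i) hlt
      have ht : (a i + min (b i) 0)/2 ∈ Set.Ioo (a i) (b i) := by
        constructor
        · linarith
        · have := min_le_left (b i) 0; linarith
      have := (h ht).1
      have := min_le_right (b i) 0; linarith
    · by_contra hlt
      push_neg at hlt
      have hm : max (a i) 1 < b i := max_lt (hne i) hlt
      have ht : (max (a i) 1 + b i)/2 ∈ Set.Ioo (a i) (b i) := by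
        constructor
        · have := le_max_left (a i) 1; linarith
        · linarith
      have := (h ht).2
      have := le_max_right (a i) 1; linarith
  -- ordering of pieces
  have hord : ∀ i j, i ≠ j → b i ≤ a j ∨ b j ≤ a i := by
    intro i j hij
    have hd : Disjoint (d.pieces i) (d.pieces j) := d.disj hij
    rw [hab i, hab j, Set.Ioo_disjoint_Ioo] at hd
    rcases min_cases (b i) (b j) with ⟨hm, _⟩ | ⟨hm, _⟩ <;>
      rcases max_cases (a i) (a j) with ⟨hM, _⟩ | ⟨hM, _⟩ <;> rw [hm, hM] at hd
    · exact absurd hd (not_le.mpr (hne i))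
    · exact Or.inl hd
    · exact Or.inr hd
    · exact absurd hd (not_le.mpr (hne j))
  -- identify leftmost and rightmost pieces
  obtain ⟨i0, hi0⟩ : ∃ i, a i = 0 := by
    have h0 : (0:ℝ) ∈ ⋃ i, closure (d.pieces i) := hc ⟨le_rfl, by norm_num⟩
    obtain ⟨i, hi⟩ := Set.mem_iUnion.mp h0
    rw [hab i, closure_Ioo (hne i).ne] at hi
    exact ⟨i, le_antisymm hi.1 (ha0 i).1⟩
  obtain ⟨i2, hi2⟩ : ∃ i, b i = 1 := by
    have h0 : (1:ℝ) ∈ ⋃ i, closure (d.pieces i) := hc ⟨by norm_num, le_rfl⟩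
    obtain ⟨i, hi⟩ := Set.mem_iUnion.mp h0
    rw [hab i, closure_Ioo (hne i).ne] at hi
    exact ⟨i, le_antisymm (ha0 i).2 hi.2⟩
  have hi02 : i0 ≠ i2 := by
    rintro rfl
    obtain ⟨j, hj⟩ := exists_ne i0
    rcases hord j i0 hj with h | h
    · have h1 := hne j; have h2 := (ha0 j).1; rw [hi0] at h; linarith
    · have h1 := hne j; have h2 := (ha0 j).2; rw [hi2] at h; linarith
  obtain ⟨i1, h10, h12⟩ : ∃ i1 : Fin 3, i1 ≠ i0 ∧ i1 ≠ i2 := by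
    have : ∀ p q : Fin 3, p ≠ q → ∃ r : Fin 3, r ≠ p ∧ r ≠ q := by decide
    exact this i0 i2 hi02
  have hcover : ∀ j : Fin 3, j = i0 ∨ j = i1 ∨ j = i2 := by
    have : ∀ p q r : Fin 3, p ≠ q → r ≠ p → r ≠ q → ∀ j : Fin 3, j = p ∨ j = r ∨ j = q := by
      decide
    exact this i0 i2 i1 hi02 h10 h12
  have h01 : b i0 ≤ a i1 := by
    rcases hord i0 i1 (Ne.symm h10) with h | h
    · exact h
    · exfalso; have h1 := hne i1; have h2 := (ha0 i1).1; rw [hi0] at h; linarith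
  have h12' : b i1 ≤ a i2 := by
    rcases hord i1 i2 h12 with h | h
    · exact h
    · exfalso; have h1 := hne i1; have h2 := (ha0 i1).2; rw [hi2] at h; linarith
  -- no gaps
  have key : ∀ t : ℝ, 0 ≤ t → t ≤ 1 →
      (a i0 ≤ t ∧ t ≤ b i0) ∨ (a i1 ≤ t ∧ t ≤ b i1) ∨ (a i2 ≤ t ∧ t ≤ b i2) := by
    intro t ht0 ht1
    obtain ⟨j, hj⟩ := Set.mem_iUnion.mp (hc ⟨ht0, ht1⟩)
    rw [hab j, closure_Ioo (hne j).ne] at hj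
    rcases hcover j with rfl | rfl | rfl
    · exact Or.inl ⟨hj.1, hj.2⟩
    · exact Or.inr (Or.inl ⟨hj.1, hj.2⟩)
    · exact Or.inr (Or.inr ⟨hj.1, hj.2⟩)
  have hg1 : b i0 = a i1 := by
    by_contra hne'
    have hlt : b i0 < a i1 := lt_of_le_of_ne h01 hne'
    have h1 : 0 ≤ (b i0 + a i1)/2 := by
      have := hne i0; rw [hi0] at this; linarith
    have h2 : (b i0 + a i1)/2 ≤ 1 := by
      have := hne i1; have := (ha0 i1).2; linarith
    rcases key _ h1 h2 with ⟨_, h⟩ | ⟨h, _⟩ | ⟨h, _⟩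
    · linarith
    · linarith
    · have := hne i1; linarith
  have hg2 : b i1 = a i2 := by
    by_contra hne'
    have hlt : b i1 < a i2 := lt_of_le_of_ne h12' hne'
    have h1 : 0 ≤ (b i1 + a i2)/2 := by
      have := hne i1; have := (ha0 i1).1; linarith
    have h2 : (b i1 + a i2)/2 ≤ 1 := by
      have := hne i2; have := (ha0 i2).2; linarith
    rcases key _ h1 h2 with ⟨_, h⟩ | ⟨_, h⟩ | ⟨h, _⟩
    · have := hne i1; linarith
    · linarith
    · linarith
  set x1 := b i0 with hx1def
  set x2 := b i1 with hx2def
  have hp0 : d.pieces i0 = Set.Ioo 0 x1 := by rw [hab, hi0]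
  have hp1 : d.pieces i1 = Set.Ioo x1 x2 := by rw [hab, ← hg1]
  have hp2 : d.pieces i2 = Set.Ioo x2 1 := by rw [hab, ← hg2, hi2]
  have hx1pos : 0 < x1 := by have := hne i0; rw [hi0] at this; exact this
  have hx12 : x1 < x2 := by have := hne i1; rw [← hg1] at this; exact this
  have hx2lt : x2 < 1 := by have := hne i2; rw [← hg2, hi2] at this; exact this
  -- player 1 gets the rightmost piece
  have h0i2 : (0 : Fin 3) = i2 := by
    by_contra h0
    have hVi2 : vEg3 ε i2 = wU := hVU i2 (fun h => h0 h.symm)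
    have e1 := hEF i2 i0
    have e2 := hEF i2 i1
    rw [hVi2, hp0, hp2, wU_Ioo le_rfl (hx12.le.trans hx2lt.le),
      wU_Ioo (show (0:ℝ) ≤ x2 by linarith) le_rfl] at e1
    rw [hVi2, hp1, hp2, wU_Ioo hx1pos.le hx2lt.le,
      wU_Ioo (show (0:ℝ) ≤ x2 by linarith) le_rfl] at e2
    rw [sub_zero] at e1
    have e1' : x1 ≤ 1 - x2 :=
      (ENNReal.ofReal_le_ofReal_iff (by linarith)).mp e1
    have e2' : x2 - x1 ≤ 1 - x2 :=
      (ENNReal.ofReal_le_ofReal_iff (by linarith)).mp e2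
    have hx2le : x2 ≤ 2/3 := by linarith
    have e0 := hEF 0 i2
    rw [hV0, hp2] at e0
    have hup : w1 ε (d.pieces 0) ≤ ENNReal.ofReal (1/2 - ε) := by
      have hsub : d.pieces 0 ⊆ Set.Ioo 0 (2/3) := by
        rcases hcover 0 with h | h | h
        · rw [h, hp0]; exact Set.Ioo_subset_Ioo le_rfl (by linarith)
        · rw [h, hp1]; exact Set.Ioo_subset_Ioo hx1pos.le hx2le
        · exact absurd h h0
      calc w1 ε (d.pieces 0) ≤ w1 ε (Set.Ioo 0 (2/3)) := measure_mono hsub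
        _ = ENNReal.ofReal (1/2-ε) := w1_left hε hε' (by norm_num) le_rfl
    have hlow : ENNReal.ofReal (1/2 + ε) ≤ w1 ε (Set.Ioo x2 1) := by
      rw [← w1_mid_right hε hε']
      exact measure_mono (Set.Ioo_subset_Ioo hx2le le_rfl)
    have hcontr := (ENNReal.ofReal_le_ofReal_iff (by linarith)).mp
      (hlow.trans (e0.trans hup))
    linarith
  -- part 2
  have hp0' : d.pieces 0 = Set.Ioo x2 1 := by rw [h0i2, hp2]
  have h00 : i0 ≠ 0 := fun h => hi02 (h.trans h0i2)
  have h11 : i1 ≠ 0 := fun h => h12 (h.trans h0i2)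
  have e1 := hEF i0 i1
  have e2 := hEF i1 i0
  have e3 := hEF i0 0
  rw [hVU i0 h00, hp0, hp1, wU_Ioo hx1pos.le hx2lt.le,
    wU_Ioo le_rfl (hx12.le.trans hx2lt.le), sub_zero] at e1
  rw [hVU i1 h11, hp0, hp1, wU_Ioo hx1pos.le hx2lt.le,
    wU_Ioo le_rfl (hx12.le.trans hx2lt.le), sub_zero] at e2
  rw [hVU i0 h00, hp0', hp0, wU_Ioo le_rfl (hx12.le.trans hx2lt.le),
    wU_Ioo (show (0:ℝ) ≤ x2 by linarith) le_rfl, sub_zero] at e3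
  have q1 : x2 - x1 ≤ x1 := (ENNReal.ofReal_le_ofReal_iff (by linarith)).mp e1
  have q2 : x1 ≤ x2 - x1 := (ENNReal.ofReal_le_ofReal_iff (by linarith)).mp e2
  have q3 : 1 - x2 ≤ x1 := (ENNReal.ofReal_le_ofReal_iff (by linarith)).mp e3
  have hx1b : x1 = x2 - x1 := le_antisymm q2 q1
  have h23 : 2/3 ≤ x2 := by linarith
  have hx1lo : 1/3 ≤ x1 := by linarith
  have e4 := hEF 0 i0
  rw [hV0, hp0, hp0', w1_left hε hε' hx1lo (by linarith)] at e4
  have hfin := e4.trans (w1_right_le hε hε' h23)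
  rw [ENNReal.ofReal_le_ofReal_iff (add_nonneg (le_max_right _ _) (by linarith))] at hfin
  have hx2b : x2 ≤ 2/3 + 2*ε := by
    rcases le_or_gt (2/3+3*ε-x2) 0 with h | h
    · rw [max_eq_right h] at hfin; linarith
    · rw [max_eq_left h.le] at hfin; linarith
  exact ⟨⟨x2, hx2lt, hp0'⟩, by rw [hp0']; exact Set.Ioo_subset_Ioo hx2b le_rfl⟩
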